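/- Generalized Christoffel–Darboux theorem: let x, x′ ∈ ℂ and let u, v : ℕ → ℂ satisfy the recurrences x·u_i = Σ_{m=0}^{i+1} Q(i,m)·u_m for all i and x′·v_j = Σ_{i=0}^{j+d} Q(i,j)·v_i for all j. Then for every n ≥ d: (x′ − x) · Σ_{j=0}^{n−1} u_j·v_j = Σ_{i=n}^{n+d−1} Σ_{j=n−d}^{n−1} Q(i,j)·u_j·v_i − Q(n−1,n)·u_n·v_{n−1}; in particular the right-hand side is exactly Σ_{i,j} A_n(i,j)·u_j·v_i, so the Christoffel–Darboux sum is carried by the finite window given by the commutator A_n := [Q, Π_{n−1}]. -/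

import Mathlib

/-- The Christoffel–Darboux matrix `A_n = [Q, Π_{n-1}]`, entrywise
`A_n(i,j) = Q(i,j)·(𝟙[j ≤ n−1] − 𝟙[i ≤ n−1])`. -/
noncomputable def Amat (Q : ℕ → ℕ → ℂ) (n i j : ℕ) : ℂ :=
  Q i j * ((if j ≤ n - 1 then (1 : ℂ) else 0) - if i ≤ n - 1 then (1 : ℂ) else 0)

private lemma ind_sum {f : ℕ → ℂ} {m k : ℕ} (h : m ≤ k) :
    ∑ j ∈ Finset.range k, (if j < m then f j else 0) = ∑ j ∈ Finset.range m, f j := by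
  rw [← Finset.sum_subset (Finset.range_subset_range.2 h)
      (fun x _ hx => if_neg (by simpa using hx))]
  exact Finset.sum_congr rfl fun x hx => if_pos (Finset.mem_range.1 hx)

theorem generalized_christoffel_darboux
    (d : ℕ) (hd : 1 ≤ d) (Q : ℕ → ℕ → ℂ)
    (hband : ∀ i j, (i + 1 < j ∨ j + d < i) → Q i j = 0)
    (x x' : ℂ) (u v : ℕ → ℂ)
    (hu : ∀ i, x * u i = ∑ m ∈ Finset.range (i + 2), Q i m * u m)
    (hv : ∀ j, x' * v j = ∑ i ∈ Finset.range (j + d + 1), Q i j * v i)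
    (n : ℕ) (hn : d ≤ n) :
    (x' - x) * (∑ j ∈ Finset.range n, u j * v j) =
      (∑ i ∈ Finset.Icc n (n + d - 1), ∑ j ∈ Finset.Icc (n - d) (n - 1), Q i j * u j * v i)
        - Q (n - 1) n * u n * v (n - 1) ∧
    (∑ i ∈ Finset.range (n + d), ∑ j ∈ Finset.range (n + d), Amat Q n i j * u j * v i) =
      (∑ i ∈ Finset.Icc n (n + d - 1), ∑ j ∈ Finset.Icc (n - d) (n - 1), Q i j * u j * v i)
        - Q (n - 1) n * u n * v (n - 1) := by
  have hn1 : 1 ≤ n := hd.trans hn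
  set N := n + d with hN
  -- split of Amat entries
  have hsplit : ∀ i j : ℕ, Amat Q n i j * u j * v i
      = (if j < n then Q i j * u j * v i else 0) - (if i < n then Q i j * u j * v i else 0) := by
    intro i j
    by_cases hj : j < n <;> by_cases hi : i < n <;>
      simp [Amat, hj, hi, show (j ≤ n - 1) ↔ j < n by omega,
        show (i ≤ n - 1) ↔ i < n by omega]
  -- S = A - B
  have hSAB : (∑ i ∈ Finset.range N, ∑ j ∈ Finset.range N, Amat Q n i j * u j * v i)
      = (∑ j ∈ Finset.range n, ∑ i ∈ Finset.range N, Q i j * u j * v i)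
        - (∑ i ∈ Finset.range n, ∑ j ∈ Finset.range N, Q i j * u j * v i) := by
    simp only [hsplit, Finset.sum_sub_distrib]
    congr 1
    · rw [Finset.sum_comm]
      rw [show (∑ j ∈ Finset.range N, ∑ i ∈ Finset.range N,
            (if j < n then Q i j * u j * v i else 0))
          = ∑ j ∈ Finset.range N,
            (if j < n then ∑ i ∈ Finset.range N, Q i j * u j * v i else 0) from
        Finset.sum_congr rfl fun j _ => by split <;> simp]
      exact ind_sum (by omega)
    · rw [show (∑ i ∈ Finset.range N, ∑ j ∈ Finset.range N,
            (if i < n then Q i j * u j * v i else 0))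
          = ∑ i ∈ Finset.range N,
            (if i < n then ∑ j ∈ Finset.range N, Q i j * u j * v i else 0) from
        Finset.sum_congr rfl fun i _ => by split <;> simp]
      exact ind_sum (by omega)
  -- A in terms of x'
  have hA' : (∑ j ∈ Finset.range n, ∑ i ∈ Finset.range N, Q i j * u j * v i)
      = ∑ j ∈ Finset.range n, (x' * v j) * u j := by
    refine Finset.sum_congr rfl fun j hj => ?_
    have hj' : j < n := Finset.mem_range.1 hj
    have hsub : Finset.range (j + d + 1) ⊆ Finset.range N := Finset.range_subset_range.2 (by omega)
    have h1 : (∑ i ∈ Finset.range N, Q i j * u j * v i)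
        = ∑ i ∈ Finset.range (j + d + 1), Q i j * u j * v i := by
      refine (Finset.sum_subset hsub fun i _ hi => ?_).symm
      rw [hband i j (Or.inr (by simpa using hi))]; ring
    rw [h1, hv j, Finset.sum_mul]
    exact Finset.sum_congr rfl fun i _ => by ring
  -- B in terms of x
  have hB' : (∑ i ∈ Finset.range n, ∑ j ∈ Finset.range N, Q i j * u j * v i)
      = ∑ i ∈ Finset.range n, (x * u i) * v i := by
    refine Finset.sum_congr rfl fun i hi => ?_
    have hi' : i < n := Finset.mem_range.1 hi
    have hsub : Finset.range (i + 2) ⊆ Finset.range N := Finset.range_subset_range.2 (by omega)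
    have h1 : (∑ j ∈ Finset.range N, Q i j * u j * v i)
        = ∑ j ∈ Finset.range (i + 2), Q i j * u j * v i := by
      refine (Finset.sum_subset hsub fun j _ hj => ?_).symm
      rw [hband i j (Or.inl (by simp at hj; omega))]; ring
    rw [h1, hu i, Finset.sum_mul]
  -- key1 : S = (x'-x) * Σ
  have key1 : (∑ i ∈ Finset.range N, ∑ j ∈ Finset.range N, Amat Q n i j * u j * v i)
      = (x' - x) * (∑ j ∈ Finset.range n, u j * v j) := by
    rw [hSAB, hA', hB', ← Finset.sum_sub_distrib, Finset.mul_sum]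
    exact Finset.sum_congr rfl fun j _ => by ring
  -- key2 : S = window - corner term
  have key2 : (∑ i ∈ Finset.range N, ∑ j ∈ Finset.range N, Amat Q n i j * u j * v i)
      = (∑ i ∈ Finset.Icc n (n + d - 1), ∑ j ∈ Finset.Icc (n - d) (n - 1), Q i j * u j * v i)
        - Q (n - 1) n * u n * v (n - 1) := by
    rw [hSAB]
    have hsplitA : ∀ g : ℕ → ℂ, (∑ i ∈ Finset.range N, g i)
        = (∑ i ∈ Finset.range n, g i) + ∑ i ∈ Finset.Ico n N, g i := by
      intro g
      rw [Finset.sum_range_add_sum_Ico g (by omega)]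
    have hA2 : (∑ j ∈ Finset.range n, ∑ i ∈ Finset.range N, Q i j * u j * v i)
        = (∑ j ∈ Finset.range n, ∑ i ∈ Finset.range n, Q i j * u j * v i)
          + ∑ j ∈ Finset.range n, ∑ i ∈ Finset.Ico n N, Q i j * u j * v i := by
      rw [← Finset.sum_add_distrib]
      exact Finset.sum_congr rfl fun j _ => hsplitA _
    have hB2 : (∑ i ∈ Finset.range n, ∑ j ∈ Finset.range N, Q i j * u j * v i)
        = (∑ i ∈ Finset.range n, ∑ j ∈ Finset.range n, Q i j * u j * v i)
          + ∑ i ∈ Finset.range n, ∑ j ∈ Finset.Ico n N, Q i j * u j * v i := by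
      rw [← Finset.sum_add_distrib]
      exact Finset.sum_congr rfl fun i _ => hsplitA _
    rw [hA2, hB2]
    have hCC : (∑ j ∈ Finset.range n, ∑ i ∈ Finset.range n, Q i j * u j * v i)
        = ∑ i ∈ Finset.range n, ∑ j ∈ Finset.range n, Q i j * u j * v i :=
      Finset.sum_comm
    have hP : (∑ j ∈ Finset.range n, ∑ i ∈ Finset.Ico n N, Q i j * u j * v i)
        = ∑ i ∈ Finset.Icc n (n + d - 1), ∑ j ∈ Finset.Icc (n - d) (n - 1), Q i j * u j * v i := by
      rw [Finset.sum_comm]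
      have hIco : Finset.Ico n N = Finset.Icc n (n + d - 1) := by
        ext i; simp [hN]; omega
      rw [hIco]
      refine Finset.sum_congr rfl fun i hi => ?_
      have hi' : n ≤ i := (Finset.mem_Icc.1 hi).1
      have hsub : Finset.Icc (n - d) (n - 1) ⊆ Finset.range n := by
        intro j hj
        simp only [Finset.mem_Icc] at hj
        exact Finset.mem_range.2 (by omega)
      refine (Finset.sum_subset hsub fun j hjr hj => ?_).symm
      have hj1 : j < n := Finset.mem_range.1 hjr
      have hj2 : j + d < i := by
        simp only [Finset.mem_Icc, not_and, not_le] at hj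
        omega
      rw [hband i j (Or.inr hj2)]; ring
    have hR : (∑ i ∈ Finset.range n, ∑ j ∈ Finset.Ico n N, Q i j * u j * v i)
        = Q (n - 1) n * u n * v (n - 1) := by
      rw [Finset.sum_eq_single (n - 1)]
      · rw [Finset.sum_eq_single n]
        · intro j hj hjn
          have : n ≤ j := (Finset.mem_Ico.1 hj).1
          rw [hband (n - 1) j (Or.inl (by omega))]; ring
        · intro h
          exact absurd (Finset.mem_Ico.2 ⟨le_refl n, by omega⟩) h
      · intro i hi hin
        have hi' : i < n := Finset.mem_range.1 hi
        refine Finset.sum_eq_zero fun j hj => ?_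
        have : n ≤ j := (Finset.mem_Ico.1 hj).1
        rw [hband i j (Or.inl (by omega))]; ring
      · intro h
        exact absurd (Finset.mem_range.2 (by omega)) h
    rw [hCC, hP, hR]
    ring
  exact ⟨key1.symm.trans key2, key2⟩
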